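/- For every nonempty bounded set F ⊆ ℝ^n, the limit of dim_{A,reg}^θ(F) as θ → 0⁺ exists and equals the upper box-counting dimension: lim_{θ→0⁺} dim_{A,reg}^θ(F) = \overline{dim}_B(F). -/

import Mathlib

open Set Metric
open scoped ENNReal

noncomputable section

/-- Covering number: the smallest number of sets of diameter at most `r` needed to
cover `F` (`∞` if no finite such cover exists). -/
def coverN {X : Type*} [PseudoMetricSpace X] (F : Set X) (r : ℝ) : ℝ≥0∞ :=
  sInf {m : ℝ≥0∞ | ∃ 𝒰 : Finset (Set X), (𝒰.card : ℝ≥0∞) = m ∧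
    (∀ U ∈ 𝒰, EMetric.diam U ≤ ENNReal.ofReal r) ∧ F ⊆ ⋃ U ∈ 𝒰, U}

/-- Regularized Assouad spectrum `dim_{A,reg}^θ(F)`. -/
def dimAreg {X : Type*} [PseudoMetricSpace X] (θ : ℝ) (F : Set X) : ℝ :=
  sInf {α : ℝ | 0 < α ∧ ∃ C : ℝ, 0 < C ∧ ∀ x ∈ F, ∀ r R : ℝ,
    0 < r → r ≤ R ^ (1/θ) → R ^ (1/θ) < R → R < 1 →
    coverN (closedBall x R ∩ F) r ≤ ENNReal.ofReal (C * (R/r) ^ α)}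

/-- (Unregularized) Assouad spectrum `dim_A^θ(F)`. -/
def dimAspec {X : Type*} [PseudoMetricSpace X] (θ : ℝ) (F : Set X) : ℝ :=
  sInf {α : ℝ | 0 < α ∧ ∃ C : ℝ, 0 < C ∧ ∀ x ∈ F, ∀ R : ℝ, 0 < R → R < 1 →
    coverN (closedBall x R ∩ F) (R ^ (1/θ)) ≤ ENNReal.ofReal (C * (R / R ^ (1/θ)) ^ α)}

/-- Upper box-counting dimension of a (bounded) set. -/
def dimBupper {X : Type*} [PseudoMetricSpace X] (F : Set X) : ℝ :=
  sInf {α : ℝ | 0 < α ∧ ∃ C : ℝ, 0 < C ∧ ∀ r : ℝ, 0 < r → r ≤ diam F →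
    coverN F r ≤ ENNReal.ofReal (C * r ^ (-α))}

/-- Assouad dimension. -/
def dimA {X : Type*} [PseudoMetricSpace X] (F : Set X) : ℝ :=
  sInf {α : ℝ | 0 < α ∧ ∃ C : ℝ, 0 < C ∧ ∀ x ∈ F, ∀ r R : ℝ, 0 < r → r ≤ R →
    coverN (closedBall x R ∩ F) r ≤ ENNReal.ofReal (C * (R/r) ^ α)}

/-- Quasi-Assouad dimension: `sup_{0<θ<1} dim_{A,reg}^θ(F)`. -/
def dimqA {X : Type*} [PseudoMetricSpace X] (F : Set X) : ℝ :=
  sSup ((fun θ => dimAreg θ F) '' Ioo (0:ℝ) 1)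

open Classical in
/-- Phase-transition parameter `ρ(F)`. -/
def rhoPT {X : Type*} [PseudoMetricSpace X] (F : Set X) : ℝ :=
  if ∃ θ ∈ Ioo (0:ℝ) 1, dimAreg θ F = dimqA F
  then sInf {θ | θ ∈ Ioo (0:ℝ) 1 ∧ dimAreg θ F = dimqA F}
  else 1

/-- The axes-parallel cube `Q(x,R) = ∏ [xᵢ - R, xᵢ + R]`. -/
def cubeQ {n : ℕ} (x : EuclideanSpace ℝ (Fin n)) (R : ℝ) : Set (EuclideanSpace ℝ (Fin n)) :=
  {y | ∀ i, x i - R ≤ y i ∧ y i ≤ x i + R}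

/-- The generation-`m` dyadic subcube of `Q(x,R)` with index `k`. -/
def dyadicCube {n : ℕ} (x : EuclideanSpace ℝ (Fin n)) (R : ℝ) (m : ℕ)
    (k : Fin n → Fin (2 ^ m)) : Set (EuclideanSpace ℝ (Fin n)) :=
  {y | ∀ i, x i - R + (k i : ℝ) * (2 * R / 2 ^ m) ≤ y i ∧
        y i ≤ x i - R + ((k i : ℝ) + 1) * (2 * R / 2 ^ m)}

/-- `N_d(B(x,R) ∩ F, m)`: the number of generation-`m` dyadic subcubes of `Q(x,R)`
that intersect `B(x,R) ∩ F`. -/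
def Nd {n : ℕ} (x : EuclideanSpace ℝ (Fin n)) (R : ℝ)
    (F : Set (EuclideanSpace ℝ (Fin n))) (m : ℕ) : ℕ :=
  Nat.card {k : Fin n → Fin (2 ^ m) // (dyadicCube x R m k ∩ (closedBall x R ∩ F)).Nonempty}

/-- `f` is `η`-quasisymmetric on the set `S`. -/
def QSOn {X Y : Type*} [PseudoMetricSpace X] [PseudoMetricSpace Y]
    (η : ℝ → ℝ) (f : X → Y) (S : Set X) : Prop :=
  ∀ x ∈ S, ∀ y ∈ S, ∀ z ∈ S, x ≠ z →
    dist (f x) (f y) ≤ η (dist x y / dist x z) * dist (f x) (f z)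

/-- Distance between two sets. -/
def setDist {X : Type*} [PseudoMetricSpace X] (A B : Set X) : ℝ :=
  sInf {d : ℝ | ∃ a ∈ A, ∃ b ∈ B, d = dist a b}

end

section Aux

variable {X : Type*} [PseudoMetricSpace X]

lemma coverN_le_card {F : Set X} {r : ℝ} (𝒰 : Finset (Set X))
    (hd : ∀ U ∈ 𝒰, EMetric.diam U ≤ ENNReal.ofReal r) (hc : F ⊆ ⋃ U ∈ 𝒰, U) :
    coverN F r ≤ 𝒰.card :=
  sInf_le ⟨𝒰, rfl, hd, hc⟩

lemma coverN_mono_set {F F' : Set X} {r : ℝ} (h : F' ⊆ F) : coverN F' r ≤ coverN F r := by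
  apply le_sInf
  rintro m ⟨𝒰, rfl, hd, hc⟩
  exact coverN_le_card 𝒰 hd (h.trans hc)

lemma coverN_mono_scale {F : Set X} {r r' : ℝ} (h : r ≤ r') : coverN F r' ≤ coverN F r := by
  apply le_sInf
  rintro m ⟨𝒰, rfl, hd, hc⟩
  exact coverN_le_card 𝒰 (fun U hU => (hd U hU).trans (ENNReal.ofReal_le_ofReal h)) hc

lemma one_le_coverN {F : Set X} {r : ℝ} (hne : F.Nonempty) : 1 ≤ coverN F r := by
  apply le_sInf
  rintro m ⟨𝒰, rfl, hd, hc⟩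
  obtain ⟨y, hy⟩ := hne
  have := hc hy
  simp only [mem_iUnion] at this
  obtain ⟨U, hU, -⟩ := this
  have : 1 ≤ 𝒰.card := Finset.card_pos.mpr ⟨U, hU⟩
  exact_mod_cast this

lemma coverN_le_one {F : Set X} {r : ℝ} (h : EMetric.diam F ≤ ENNReal.ofReal r) :
    coverN F r ≤ 1 := by
  have := coverN_le_card (F := F) (r := r) {F} (by simpa using h) (by simp)
  simpa using this

lemma coverN_exists {F : Set X} {r : ℝ} (h : coverN F r ≠ ⊤) :
    ∃ 𝒰 : Finset (Set X), (𝒰.card : ℝ≥0∞) = coverN F r ∧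
      (∀ U ∈ 𝒰, EMetric.diam U ≤ ENNReal.ofReal r) ∧ F ⊆ ⋃ U ∈ 𝒰, U := by
  have hTne : {k : ℕ | ∃ 𝒰 : Finset (Set X), 𝒰.card = k ∧
      (∀ U ∈ 𝒰, EMetric.diam U ≤ ENNReal.ofReal r) ∧ F ⊆ ⋃ U ∈ 𝒰, U}.Nonempty := by
    by_contra hcon
    rw [Set.not_nonempty_iff_eq_empty] at hcon
    apply h
    rw [coverN]
    convert sInf_empty
    · rfl
    rw [Set.eq_empty_iff_forall_notMem]
    rintro m ⟨𝒰, hm, hd, hc⟩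
    have hmem : 𝒰.card ∈ {k : ℕ | ∃ 𝒰 : Finset (Set X), 𝒰.card = k ∧
        (∀ U ∈ 𝒰, EMetric.diam U ≤ ENNReal.ofReal r) ∧ F ⊆ ⋃ U ∈ 𝒰, U} := ⟨𝒰, rfl, hd, hc⟩
    rw [hcon] at hmem
    exact hmem
  obtain ⟨𝒰, h𝒰, hd, hc⟩ := Nat.sInf_mem hTne
  refine ⟨𝒰, ?_, hd, hc⟩
  refine le_antisymm (le_sInf ?_) (sInf_le ⟨𝒰, rfl, hd, hc⟩)
  rintro m ⟨𝒱, rfl, hd', hc'⟩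
  have hmem : 𝒱.card ∈ {k : ℕ | ∃ 𝒰 : Finset (Set X), 𝒰.card = k ∧
      (∀ U ∈ 𝒰, EMetric.diam U ≤ ENNReal.ofReal r) ∧ F ⊆ ⋃ U ∈ 𝒰, U} := ⟨𝒱, rfl, hd', hc'⟩
  have h1 := Nat.sInf_le hmem
  rw [h𝒰]
  exact_mod_cast h1

lemma coverN_submul {F : Set X} (hne : F.Nonempty) {r R : ℝ} (hR : 0 ≤ R) (M : ℝ≥0∞)
    (h : ∀ x ∈ F, coverN (closedBall x R ∩ F) r ≤ M) :
    coverN F r ≤ coverN F R * M := by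
  classical
  have hM1 : 1 ≤ M := by
    obtain ⟨x, hx⟩ := hne
    exact le_trans (one_le_coverN (F := closedBall x R ∩ F) (r := r) ⟨x, mem_closedBall_self hR, hx⟩) (h x hx)
  rcases eq_or_ne (coverN F R) ⊤ with hT | hT
  · rw [hT, ENNReal.top_mul (by intro h0; rw [h0] at hM1; simp at hM1)]
    exact le_top
  have hcov0 : coverN F R ≠ 0 := by
    intro h0
    have := one_le_coverN (F := F) (r := R) hne
    rw [h0] at this; simp at this
  rcases eq_or_ne M ⊤ with hMT | hMT
  · rw [hMT, ENNReal.mul_top hcov0]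
    exact le_top
  obtain ⟨𝒰, h𝒰, hdR, hcR⟩ := coverN_exists hT
  have key : ∀ U : Set X, ∃ 𝒱 : Finset (Set X), U ∈ 𝒰 →
      ((𝒱.card : ℝ≥0∞) ≤ M ∧ (∀ V ∈ 𝒱, EMetric.diam V ≤ ENNReal.ofReal r) ∧
        U ∩ F ⊆ ⋃ V ∈ 𝒱, V) := by
    intro U
    by_cases hU : U ∈ 𝒰
    swap
    · exact ⟨∅, fun h' => absurd h' hU⟩
    by_cases hUF : (U ∩ F).Nonempty
    swap
    · refine ⟨∅, fun _ => ⟨by simp, by simp, ?_⟩⟩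
      rw [Set.not_nonempty_iff_eq_empty] at hUF
      rw [hUF]
      simp
    obtain ⟨x, hxU, hxF⟩ := hUF
    have hsub : U ∩ F ⊆ closedBall x R ∩ F := by
      rintro y ⟨hyU, hyF⟩
      refine ⟨mem_closedBall.mpr ?_, hyF⟩
      have h1 : edist y x ≤ EMetric.diam U := EMetric.edist_le_diam_of_mem hyU hxU
      exact (edist_le_ofReal hR).mp (h1.trans (hdR U hU))
    have hle : coverN (U ∩ F) r ≤ M := le_trans (coverN_mono_set hsub) (h x hxF)
    obtain ⟨𝒱, h𝒱, hd', hc'⟩ := coverN_exists (fun ht => hMT (top_le_iff.mp (ht ▸ hle)))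
    exact ⟨𝒱, fun _ => ⟨h𝒱 ▸ hle, hd', hc'⟩⟩
  choose g hg using key
  have hcov : coverN F r ≤ ((𝒰.biUnion g).card : ℝ≥0∞) := by
    apply coverN_le_card
    · intro V hV
      obtain ⟨U, hU, hVU⟩ := Finset.mem_biUnion.mp hV
      exact (hg U hU).2.1 V hVU
    · intro y hy
      have := hcR hy
      simp only [mem_iUnion] at this
      obtain ⟨U, hU, hyU⟩ := this
      have := (hg U hU).2.2 ⟨hyU, hy⟩
      simp only [mem_iUnion] at this ⊢
      obtain ⟨V, hV, hyV⟩ := this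
      exact ⟨V, Finset.mem_biUnion.mpr ⟨U, hU, hV⟩, hyV⟩
  refine hcov.trans ?_
  have h1 : ((𝒰.biUnion g).card : ℝ≥0∞) ≤ ∑ U ∈ 𝒰, ((g U).card : ℝ≥0∞) := by
    rw [← Nat.cast_sum]
    exact_mod_cast Finset.card_biUnion_le
  refine h1.trans ?_
  have h2 : ∑ U ∈ 𝒰, ((g U).card : ℝ≥0∞) ≤ ∑ _U ∈ 𝒰, M :=
    Finset.sum_le_sum (fun U hU => (hg U hU).1)
  refine h2.trans ?_
  rw [Finset.sum_const, nsmul_eq_mul, h𝒰]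

lemma coord_dist_le {n : ℕ} (y z : EuclideanSpace ℝ (Fin n)) (i : Fin n) :
    dist (y i) (z i) ≤ dist y z := by
  rw [EuclideanSpace.dist_eq]
  have h1 : dist (y i) (z i) ^ 2 ≤ ∑ j, dist (y j) (z j) ^ 2 :=
    Finset.single_le_sum (f := fun j => dist (y j) (z j) ^ 2)
      (fun j _ => sq_nonneg _) (Finset.mem_univ i)
  calc dist (y i) (z i) = Real.sqrt (dist (y i) (z i) ^ 2) := (Real.sqrt_sq dist_nonneg).symm
    _ ≤ _ := Real.sqrt_le_sqrt h1

lemma coverN_grid {n : ℕ} (hn : 0 < n) (x0 : EuclideanSpace ℝ (Fin n)) {D : ℝ} (hD : 1 ≤ D)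
    {F : Set (EuclideanSpace ℝ (Fin n))} (hFD : F ⊆ closedBall x0 D) {s : ℝ} (hs : 0 < s)
    (hsD : s ≤ 2 * D) :
    coverN F s ≤ ENNReal.ofReal ((6 * D * n / s) ^ n) := by
  classical
  set h := s / n with hh
  have hn' : (0:ℝ) < n := by exact_mod_cast hn
  have hh0 : 0 < h := div_pos hs hn'
  set I : Finset (Fin n → ℤ) :=
    Fintype.piFinset (fun i => Finset.Icc ⌊(x0 i - D) / h⌋ ⌊(x0 i + D) / h⌋) with hI
  set U : (Fin n → ℤ) → Set (EuclideanSpace ℝ (Fin n)) :=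
    fun k => {y | ∀ i, ⌊y i / h⌋ = k i} with hU
  have hdiam : ∀ k, EMetric.diam (U k) ≤ ENNReal.ofReal s := by
    intro k
    apply EMetric.diam_le
    intro y hy z hz
    rw [edist_dist]
    apply ENNReal.ofReal_le_ofReal
    have hco : ∀ i, dist (y i) (z i) ≤ h := by
      intro i
      have h1 : ⌊y i / h⌋ = k i := hy i
      have h2 : ⌊z i / h⌋ = k i := hz i
      have hy1 : (k i : ℝ) ≤ y i / h := h1 ▸ Int.floor_le _
      have hy2 : y i / h < k i + 1 := by rw [← h1]; exact Int.lt_floor_add_one _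
      have hz1 : (k i : ℝ) ≤ z i / h := h2 ▸ Int.floor_le _
      have hz2 : z i / h < k i + 1 := by rw [← h2]; exact Int.lt_floor_add_one _
      have hy1' : (k i : ℝ) * h ≤ y i := (le_div_iff₀ hh0).mp hy1
      have hy2' : y i < ((k i : ℝ) + 1) * h := (div_lt_iff₀ hh0).mp hy2
      have hz1' : (k i : ℝ) * h ≤ z i := (le_div_iff₀ hh0).mp hz1
      have hz2' : z i < ((k i : ℝ) + 1) * h := (div_lt_iff₀ hh0).mp hz2
      have habs : |y i - z i| ≤ h := by
        rw [abs_le]; constructor <;> nlinarith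
      simpa [Real.dist_eq] using habs
    rw [EuclideanSpace.dist_eq]
    have hsum : ∑ i, dist (y i) (z i) ^ 2 ≤ s ^ 2 := by
      have : ∑ i, dist (y i) (z i) ^ 2 ≤ ∑ _i : Fin n, h ^ 2 :=
        Finset.sum_le_sum (fun i _ => pow_le_pow_left₀ dist_nonneg (hco i) 2)
      rw [Finset.sum_const, Finset.card_univ, Fintype.card_fin, nsmul_eq_mul] at this
      refine this.trans ?_
      have hkey : (n:ℝ) * h ^ 2 = s ^ 2 / n := by
        rw [hh]; field_simp
      rw [hkey]
      exact div_le_self (sq_nonneg s) (Nat.one_le_cast.mpr hn)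
    calc Real.sqrt (∑ i, dist (y i) (z i) ^ 2) ≤ Real.sqrt (s ^ 2) := Real.sqrt_le_sqrt hsum
      _ = s := Real.sqrt_sq hs.le
  have hcover : F ⊆ ⋃ V ∈ I.image U, V := by
    intro y hy
    set k : Fin n → ℤ := fun i => ⌊y i / h⌋ with hk
    have hyB : dist y x0 ≤ D := mem_closedBall.mp (hFD hy)
    have hkI : k ∈ I := by
      rw [hI, Fintype.mem_piFinset]
      intro i
      have hci : |y i - x0 i| ≤ D := by
        have := coord_dist_le y x0 i
        rw [Real.dist_eq] at this
        exact this.trans hyB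
      rw [abs_le] at hci
      rw [Finset.mem_Icc]
      constructor
      · exact Int.floor_le_floor ((div_le_div_iff_of_pos_right hh0).mpr (by linarith [hci.1]))
      · exact Int.floor_le_floor ((div_le_div_iff_of_pos_right hh0).mpr (by linarith [hci.2]))
    simp only [mem_iUnion]
    exact ⟨U k, Finset.mem_image_of_mem U hkI, fun i => rfl⟩
  have hcard := coverN_le_card (I.image U) (by
    intro V hV
    obtain ⟨k, _, rfl⟩ := Finset.mem_image.mp hV
    exact hdiam k) hcover
  refine hcard.trans ?_
  have hIcard : (I.card : ℝ) ≤ (6 * D * n / s) ^ n := by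
    rw [hI, Fintype.card_piFinset]
    push_cast
    have hbound : ∀ i : Fin n, ((Finset.Icc ⌊(x0 i - D) / h⌋ ⌊(x0 i + D) / h⌋).card : ℝ) ≤
        6 * D * n / s := by
      intro i
      set a := ⌊(x0 i - D) / h⌋
      set b := ⌊(x0 i + D) / h⌋
      have hgoal : (2:ℝ) * D / h + 2 ≤ 6 * D * n / s := by
        rw [hh]
        rw [div_div_eq_mul_div]
        have h2 : (2:ℝ) ≤ 4 * D * n / s := by
          rw [le_div_iff₀ hs]
          have h1n : (1:ℝ) ≤ n := Nat.one_le_cast.mpr hn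
          nlinarith [mul_le_mul_of_nonneg_left h1n (by linarith : (0:ℝ) ≤ 2*D)]
        have h3 : (2:ℝ) * D * n / s + 4 * D * n / s = 6 * D * n / s := by ring
        linarith [h3, h2, le_refl ((2:ℝ) * D * n / s)]
      rcases le_or_gt a b with hab | hab
      · rw [Int.card_Icc]
        have hnn : (0:ℤ) ≤ b + 1 - a := by omega
        rw [show (((b + 1 - a).toNat : ℕ) : ℝ) = ((b:ℝ) + 1 - a) from by
          rw [← Int.cast_natCast, Int.toNat_of_nonneg hnn]; push_cast; ring]
        have hb : (b:ℝ) ≤ (x0 i + D) / h := Int.floor_le _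
        have ha : (x0 i - D) / h - 1 < (a:ℝ) := Int.sub_one_lt_floor _
        have hdiff : (x0 i + D) / h - (x0 i - D) / h = 2 * D / h := by
          field_simp; ring
        linarith
      · rw [Finset.Icc_eq_empty_of_lt hab]
        simp only [Finset.card_empty, Nat.cast_zero]
        have h6 : (0:ℝ) ≤ 6 * D * n := by nlinarith [hn'.le]
        exact div_nonneg h6 hs.le
    calc ∏ i : Fin n, ((Finset.Icc ⌊(x0 i - D) / h⌋ ⌊(x0 i + D) / h⌋).card : ℝ) ≤
        ∏ _i : Fin n, (6 * D * n / s) :=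
          Finset.prod_le_prod (fun i _ => Nat.cast_nonneg _) (fun i _ => hbound i)
      _ = (6 * D * n / s) ^ n := by
          rw [Finset.prod_const, Finset.card_univ, Fintype.card_fin]
  calc ((I.image U).card : ℝ≥0∞) ≤ (I.card : ℝ≥0∞) := by
        exact_mod_cast Finset.card_image_le
    _ = ENNReal.ofReal (I.card : ℝ) := (ENNReal.ofReal_natCast _).symm
    _ ≤ _ := ENNReal.ofReal_le_ofReal hIcard


lemma lemmaA {n : ℕ} (F : Set (EuclideanSpace ℝ (Fin n))) (hne : F.Nonempty)
    (hF : Bornology.IsBounded F) :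
    ∃ D K : ℝ, 1 ≤ D ∧ 0 < K ∧ diam F ≤ 2 * D ∧
      ∀ s : ℝ, 0 < s → s ≤ 2 * D →
        coverN F s ≤ ENNReal.ofReal (K * s ^ (-((n:ℝ) + 1))) := by
  obtain ⟨x0, hx0⟩ := hne
  obtain ⟨D0, hD0⟩ := hF.subset_closedBall x0
  set D := max D0 1 with hDdef
  have hD : 1 ≤ D := le_max_right _ _
  have hD0' : (0:ℝ) < D := lt_of_lt_of_le one_pos hD
  have hFD : F ⊆ closedBall x0 D := hD0.trans (closedBall_subset_closedBall (le_max_left _ _))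
  have hdiamF : diam F ≤ 2 * D := by
    apply Metric.diam_le_of_forall_dist_le (by linarith)
    intro y hy z hz
    calc dist y z ≤ dist y x0 + dist x0 z := dist_triangle _ _ _
      _ ≤ D + D := add_le_add (mem_closedBall.mp (hFD hy))
          (by rw [dist_comm]; exact mem_closedBall.mp (hFD hz))
      _ = 2 * D := by ring
  rcases Nat.eq_zero_or_pos n with hn0 | hn
  · refine ⟨D, 2 * D, hD, by linarith, hdiamF, ?_⟩
    intro s hs hsD
    have hsub : (F : Set (EuclideanSpace ℝ (Fin n))).Subsingleton := by
      intro a _ b _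
      ext i
      subst hn0
      exact absurd i.2 (by omega)
    have h1 : coverN F s ≤ 1 := coverN_le_one (by
      exact (EMetric.diam_subsingleton hsub).le.trans zero_le)
    refine h1.trans ?_
    rw [show (1:ℝ≥0∞) = ENNReal.ofReal 1 from by simp]
    apply ENNReal.ofReal_le_ofReal
    subst hn0
    calc (1:ℝ) ≤ 2 * D / s := (one_le_div hs).mpr hsD
      _ = 2 * D * s ^ (-(((0:ℕ):ℝ) + 1)) := by
          rw [show -(((0:ℕ):ℝ) + 1) = (-1:ℝ) from by norm_num, Real.rpow_neg_one,
            div_eq_mul_inv]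
  · have hn' : (0:ℝ) < n := Nat.cast_pos.mpr hn
    have hK : 0 < (6 * D * (n:ℝ)) ^ n * (2 * D) :=
      mul_pos (pow_pos (by nlinarith) n) (by linarith)
    refine ⟨D, (6 * D * (n:ℝ)) ^ n * (2 * D), hD, hK, hdiamF, ?_⟩
    intro s hs hsD
    refine (coverN_grid hn x0 hD hFD hs hsD).trans ?_
    apply ENNReal.ofReal_le_ofReal
    rw [Real.rpow_neg hs.le, show ((n:ℝ) + 1) = ((n + 1 : ℕ):ℝ) from by push_cast; ring,
      Real.rpow_natCast]
    have hkey : (6 * D * (n:ℝ)) ^ n * (2 * D) * (s ^ (n+1))⁻¹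
        = (6 * D * (n:ℝ)) ^ n * (2 * D) / s ^ (n+1) := by
      rw [div_eq_mul_inv]
    rw [div_pow, hkey, div_le_div_iff₀ (by positivity) (by positivity)]
    have h0 : (0:ℝ) ≤ (6 * D * (n:ℝ)) ^ n :=
      pow_nonneg (by nlinarith) n
    calc (6 * D * (n:ℝ)) ^ n * s ^ (n+1) = (6 * D * (n:ℝ)) ^ n * s ^ n * s := by ring
      _ ≤ (6 * D * (n:ℝ)) ^ n * s ^ n * (2 * D) := by
          apply mul_le_mul_of_nonneg_left hsD
          exact mul_nonneg h0 (pow_nonneg hs.le n)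
      _ = (6 * D * (n:ℝ)) ^ n * (2 * D) * s ^ n := by ring

/-- The defining set of the upper box dimension. -/
def SB {X : Type*} [PseudoMetricSpace X] (F : Set X) : Set ℝ :=
  {α : ℝ | 0 < α ∧ ∃ C : ℝ, 0 < C ∧ ∀ r : ℝ, 0 < r → r ≤ diam F →
    coverN F r ≤ ENNReal.ofReal (C * r ^ (-α))}

/-- The defining set of the regularized Assouad spectrum. -/
def SA {X : Type*} [PseudoMetricSpace X] (θ : ℝ) (F : Set X) : Set ℝ :=
  {α : ℝ | 0 < α ∧ ∃ C : ℝ, 0 < C ∧ ∀ x ∈ F, ∀ r R : ℝ,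
    0 < r → r ≤ R ^ (1/θ) → R ^ (1/θ) < R → R < 1 →
    coverN (closedBall x R ∩ F) r ≤ ENNReal.ofReal (C * (R/r) ^ α)}

lemma dimBupper_eq {X : Type*} [PseudoMetricSpace X] (F : Set X) :
    dimBupper F = sInf (SB F) := rfl

lemma dimAreg_eq {X : Type*} [PseudoMetricSpace X] (θ : ℝ) (F : Set X) :
    dimAreg θ F = sInf (SA θ F) := rfl

lemma SB_bddBelow {X : Type*} [PseudoMetricSpace X] (F : Set X) : BddBelow (SB F) :=
  ⟨0, fun _ hα => hα.1.le⟩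

lemma SA_bddBelow {X : Type*} [PseudoMetricSpace X] (θ : ℝ) (F : Set X) : BddBelow (SA θ F) :=
  ⟨0, fun _ hα => hα.1.le⟩

lemma SB_ne {n : ℕ} (F : Set (EuclideanSpace ℝ (Fin n))) (hne : F.Nonempty)
    (hF : Bornology.IsBounded F) : ((n:ℝ) + 1) ∈ SB F := by
  obtain ⟨D, K, hD, hK, hdiamF, hcov⟩ := lemmaA F hne hF
  refine ⟨by positivity, K, hK, fun r hr hrd => ?_⟩
  exact hcov r hr (hrd.trans hdiamF)

lemma upper_mem {n : ℕ} (F : Set (EuclideanSpace ℝ (Fin n)))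
    (hF : Bornology.IsBounded F) {θ α : ℝ} (hθ : θ ∈ Ioo (0:ℝ) 1)
    (hα : α ∈ SB F) : α / (1 - θ) ∈ SA θ F := by
  obtain ⟨hα0, C, hC, hbox⟩ := hα
  have hθ1 : 0 < 1 - θ := by linarith [hθ.2]
  set β := α / (1 - θ) with hβdef
  have hβ0 : 0 < β := div_pos hα0 hθ1
  refine ⟨hβ0, C + 1, by linarith, ?_⟩
  intro x hx r R hr hrR hRR hR1
  have hRpow : 0 < R ^ (1/θ) := lt_of_lt_of_le hr hrR
  have hR0 : 0 < R := hRpow.trans hRR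
  have hrR' : r < R := lt_of_le_of_lt hrR hRR
  have hRr1 : 1 ≤ R / r := (one_le_div hr).mpr hrR'.le
  have hpow1 : 1 ≤ (R / r) ^ β := Real.one_le_rpow hRr1 hβ0.le
  rcases le_or_gt r (diam F) with hcase | hcase
  · refine (coverN_mono_set inter_subset_right).trans ((hbox r hr hcase).trans ?_)
    apply ENNReal.ofReal_le_ofReal
    have h1 : r ^ θ ≤ R := by
      have h2 := Real.rpow_le_rpow hr.le hrR hθ.1.le
      rwa [← Real.rpow_mul hR0.le, one_div_mul_cancel (ne_of_gt hθ.1),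
        Real.rpow_one] at h2
    have h3 : r ^ (-α) ≤ (R / r) ^ β := by
      rw [Real.div_rpow hR0.le hr.le]
      have h4 : r ^ (θ * β) ≤ R ^ β :=
        (Real.rpow_mul hr.le θ β) ▸ Real.rpow_le_rpow (Real.rpow_nonneg hr.le θ) h1 hβ0.le
      have h5 : r ^ (-α) = r ^ (θ * β) / r ^ β := by
        rw [← Real.rpow_sub hr]
        congr 1
        rw [hβdef]
        field_simp
        ring
      rw [h5]
      exact div_le_div_of_nonneg_right h4 (Real.rpow_pos_of_pos hr β).le
    have hrpow : (0:ℝ) ≤ r ^ (-α) := Real.rpow_nonneg hr.le _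
    nlinarith [Real.rpow_nonneg (div_nonneg hR0.le hr.le) β]
  · have h1 : coverN (closedBall x R ∩ F) r ≤ 1 := by
      apply coverN_le_one
      refine le_trans (EMetric.diam_mono inter_subset_right) ?_
      apply Metric.ediam_le_of_forall_dist_le
      intro a ha b hb
      exact (dist_le_diam_of_mem hF ha hb).trans hcase.le
    refine h1.trans ?_
    rw [ENNReal.one_le_ofReal]
    nlinarith

set_option maxHeartbeats 1000000 in
lemma lower_mem {n : ℕ} (F : Set (EuclideanSpace ℝ (Fin n))) (hne : F.Nonempty)
    (hF : Bornology.IsBounded F) {θ β ε : ℝ} (hθ : θ ∈ Ioo (0:ℝ) 1)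
    (hβ : β ∈ SA θ F) (hε : 0 < ε) : β + ε ∈ SB F := by
  obtain ⟨hβ0, C, hC, hspec⟩ := hβ
  obtain ⟨D, K, hD, hK, hdiamF, hcov⟩ := lemmaA F hne hF
  have hθ0 := hθ.1
  have hθ1 : 0 < 1 - θ := by linarith [hθ.2]
  set C₁ := C + 1 with hC₁
  have hC₁1 : 1 < C₁ := by linarith
  have hC₁0 : 0 < C₁ := by linarith
  set e := (1 - θ) * ε with he
  have he0 : 0 < e := mul_pos hθ1 hε
  set ρ := min (1/2 : ℝ) ((1/C₁) ^ (1/e)) with hρdef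
  have hinv0 : (0:ℝ) < (1/C₁) ^ (1/e) := Real.rpow_pos_of_pos (by positivity) _
  have hρ0 : 0 < ρ := lt_min one_half_pos hinv0
  have hρhalf : ρ ≤ 1/2 := min_le_left _ _
  have hρ1 : ρ < 1 := lt_of_le_of_lt hρhalf (by norm_num)
  have hρeC : ρ ^ e ≤ 1 / C₁ := by
    have h3 : ρ ^ e ≤ ((1/C₁) ^ (1/e)) ^ e :=
      Real.rpow_le_rpow hρ0.le (min_le_right _ _) he0.le
    rwa [← Real.rpow_mul (by positivity), one_div_mul_cancel he0.ne',
      Real.rpow_one] at h3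
  set Kρ := K * ρ ^ (-((n:ℝ)+1)) with hKρdef
  have hKρ0 : 0 < Kρ := mul_pos hK (Real.rpow_pos_of_pos hρ0 _)
  have hKρ : coverN F ρ ≤ ENNReal.ofReal Kρ := hcov ρ hρ0 (by linarith)
  set C' := Kρ + 1 with hC'def
  have hC'0 : 0 < C' := by linarith
  -- base estimate for ρ ≤ r < 1
  have base : ∀ r : ℝ, ρ ≤ r → r < 1 →
      coverN F r ≤ ENNReal.ofReal (C' * r ^ (-(β+ε))) := by
    intro r hρr hr1
    have hr0 : 0 < r := lt_of_lt_of_le hρ0 hρr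
    refine (coverN_mono_scale hρr).trans (hKρ.trans (ENNReal.ofReal_le_ofReal ?_))
    have h1 : (1:ℝ) ≤ r ^ (-(β+ε)) :=
      Real.one_le_rpow_of_pos_of_le_one_of_nonpos hr0 hr1.le (by linarith)
    nlinarith
  -- one covering step
  have step : ∀ r : ℝ, 0 < r → r < 1 →
      coverN F r ≤ coverN F (r ^ θ) * ENNReal.ofReal (C₁ * (r ^ θ / r) ^ β) := by
    intro r hr hr1
    apply coverN_submul hne (Real.rpow_nonneg hr.le θ)
    intro x hx
    have hcond1 : r ≤ (r ^ θ) ^ (1/θ) := by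
      rw [← Real.rpow_mul hr.le, mul_one_div_cancel hθ0.ne', Real.rpow_one]
    have hcond2 : (r ^ θ) ^ (1/θ) < r ^ θ := by
      rw [← Real.rpow_mul hr.le, mul_one_div_cancel hθ0.ne', Real.rpow_one]
      calc r = r ^ (1:ℝ) := (Real.rpow_one r).symm
        _ < r ^ θ := Real.rpow_lt_rpow_of_exponent_gt hr hr1 hθ.2
    have hcond3 : r ^ θ < 1 := Real.rpow_lt_one hr.le hr1 hθ0
    refine (hspec x hx r (r ^ θ) hr hcond1 hcond2 hcond3).trans ?_
    apply ENNReal.ofReal_le_ofReal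
    have h2 : (0:ℝ) ≤ (r ^ θ / r) ^ β :=
      Real.rpow_nonneg (div_nonneg (Real.rpow_nonneg hr.le θ) hr.le) β
    nlinarith
  -- main induction
  have main : ∀ m : ℕ, ∀ r : ℝ, 0 < r → ρ ^ ((1/θ:ℝ)^m) ≤ r → r < 1 →
      coverN F r ≤ ENNReal.ofReal (C' * r ^ (-(β+ε))) := by
    intro m
    induction m with
    | zero =>
      intro r hr hρr hr1
      rw [pow_zero, Real.rpow_one] at hρr
      exact base r hρr hr1
    | succ m ih =>
      intro r hr hρr hr1
      rcases le_or_gt ρ r with hcase | hcase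
      · exact base r hcase hr1
      have hr'0 : 0 < r ^ θ := Real.rpow_pos_of_pos hr θ
      have hr'1 : r ^ θ < 1 := Real.rpow_lt_one hr.le hr1 hθ0
      have hρr' : ρ ^ ((1/θ:ℝ)^m) ≤ r ^ θ := by
        have h2 := Real.rpow_le_rpow (Real.rpow_nonneg hρ0.le _) hρr hθ0.le
        rwa [← Real.rpow_mul hρ0.le, show ((1/θ:ℝ)^(m+1) * θ) = (1/θ:ℝ)^m from by
          rw [pow_succ, mul_assoc, one_div, inv_mul_cancel₀ hθ0.ne', mul_one]] at h2
      have hih := ih (r ^ θ) hr'0 hρr' hr'1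
      refine (step r hr hr1).trans ?_
      calc coverN F (r ^ θ) * ENNReal.ofReal (C₁ * (r ^ θ / r) ^ β)
          ≤ ENNReal.ofReal (C' * (r ^ θ) ^ (-(β+ε))) *
              ENNReal.ofReal (C₁ * (r ^ θ / r) ^ β) := mul_le_mul_left hih _
        _ = ENNReal.ofReal (C' * (r ^ θ) ^ (-(β+ε)) * (C₁ * (r ^ θ / r) ^ β)) :=
            (ENNReal.ofReal_mul (mul_nonneg hC'0.le (Real.rpow_nonneg hr'0.le _))).symm
        _ ≤ ENNReal.ofReal (C' * r ^ (-(β+ε))) := by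
            apply ENNReal.ofReal_le_ofReal
            have hre0 : 0 < r ^ e := Real.rpow_pos_of_pos hr e
            have hC1r : C₁ ≤ r ^ (-e) := by
              have h1 : r ^ e ≤ ρ ^ e := Real.rpow_le_rpow hr.le hcase.le he0.le
              have h4 : C₁ * (r ^ e) ≤ 1 := by
                calc C₁ * (r ^ e) ≤ C₁ * (1/C₁) :=
                      mul_le_mul_of_nonneg_left (h1.trans hρeC) hC₁0.le
                  _ = 1 := by field_simp
              have h5 : (r ^ e) * (r ^ e)⁻¹ = 1 := mul_inv_cancel₀ hre0.ne'
              rw [Real.rpow_neg hr.le]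
              nlinarith [h4, h5, hre0]
            have e1 : (r ^ θ : ℝ) ^ (-(β+ε)) = r ^ (θ * (-(β+ε))) :=
              (Real.rpow_mul hr.le θ _).symm
            have e2 : (r ^ θ / r) ^ β = r ^ ((θ - 1) * β) := by
              rw [show r ^ θ / r = r ^ (θ - 1) from by
                rw [Real.rpow_sub hr, Real.rpow_one], ← Real.rpow_mul hr.le]
            rw [e1, e2]
            calc C' * r ^ (θ * (-(β+ε))) * (C₁ * r ^ ((θ-1) * β))
                ≤ C' * r ^ (θ * (-(β+ε))) * (r ^ (-e) * r ^ ((θ-1) * β)) := by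
                  apply mul_le_mul_of_nonneg_left
                    (mul_le_mul_of_nonneg_right hC1r (Real.rpow_nonneg hr.le _))
                    (mul_nonneg hC'0.le (Real.rpow_nonneg hr.le _))
              _ = C' * r ^ (θ * (-(β+ε)) + (-e + (θ-1) * β)) := by
                  rw [Real.rpow_add hr, Real.rpow_add hr]; ring
              _ = C' * r ^ (-(β+ε)) := by
                  congr 2
                  rw [he]; ring
  -- conclude
  have h2D0 : (0:ℝ) < 2 * D := by linarith
  have hpow2D : (0:ℝ) < (2*D) ^ (β+ε) := Real.rpow_pos_of_pos h2D0 _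
  refine ⟨by linarith, C' + K * (2*D) ^ (β+ε), by nlinarith [mul_pos hK hpow2D], ?_⟩
  intro r hr hrd
  have hrpownn : (0:ℝ) ≤ r ^ (-(β+ε)) := Real.rpow_nonneg hr.le _
  rcases lt_or_ge r 1 with hr1 | hr1
  · obtain ⟨m, hm⟩ : ∃ m : ℕ, Real.log r / Real.log ρ < (1/θ:ℝ)^m :=
      pow_unbounded_of_one_lt _ (one_lt_one_div hθ0 hθ.2)
    have hρm : ρ ^ ((1/θ:ℝ)^m) ≤ r := by
      have hlogρ : Real.log ρ < 0 := Real.log_neg hρ0 hρ1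
      have h1 : ((1/θ:ℝ)^m) * Real.log ρ ≤ Real.log r :=
        (div_le_iff_of_neg hlogρ).mp hm.le
      calc ρ ^ ((1/θ:ℝ)^m) = Real.exp (Real.log ρ * (1/θ:ℝ)^m) :=
            Real.rpow_def_of_pos hρ0 _
        _ ≤ Real.exp (Real.log r) := Real.exp_le_exp.mpr (by linarith)
        _ = r := Real.exp_log hr
    refine (main m r hr hρm hr1).trans (ENNReal.ofReal_le_ofReal ?_)
    have h6 : C' ≤ C' + K * (2*D) ^ (β+ε) := by linarith [mul_pos hK hpow2D]
    exact mul_le_mul_of_nonneg_right h6 hrpownn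
  · have hr2D : r ≤ 2*D := hrd.trans hdiamF
    refine (hcov r hr hr2D).trans (ENNReal.ofReal_le_ofReal ?_)
    have h1 : r ^ (-((n:ℝ)+1)) ≤ 1 :=
      Real.rpow_le_one_of_one_le_of_nonpos hr1 (by nlinarith [Nat.cast_nonneg (α := ℝ) n])
    have h2 : K * r ^ (-((n:ℝ)+1)) ≤ K := by
      nlinarith [Real.rpow_nonneg hr.le (-((n:ℝ)+1)), hK]
    have h3 : (2*D) ^ (-(β+ε)) ≤ r ^ (-(β+ε)) := by
      rw [Real.rpow_neg h2D0.le, Real.rpow_neg hr.le]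
      exact inv_anti₀ (Real.rpow_pos_of_pos hr _)
        (Real.rpow_le_rpow hr.le hr2D (by linarith))
    have h4 : K ≤ (K * (2*D) ^ (β+ε)) * r ^ (-(β+ε)) := by
      have h5 : (K * (2*D) ^ (β+ε)) * (2*D) ^ (-(β+ε)) = K := by
        rw [mul_assoc, ← Real.rpow_add h2D0, add_neg_cancel, Real.rpow_zero, mul_one]
      calc K = (K * (2*D) ^ (β+ε)) * (2*D) ^ (-(β+ε)) := h5.symm
        _ ≤ (K * (2*D) ^ (β+ε)) * r ^ (-(β+ε)) :=
            mul_le_mul_of_nonneg_left h3 (mul_pos hK hpow2D).le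
    linarith [mul_nonneg hC'0.le hrpownn, h2, h4]

lemma dimAreg_le_div {n : ℕ} (F : Set (EuclideanSpace ℝ (Fin n))) (hne : F.Nonempty)
    (hF : Bornology.IsBounded F) {θ : ℝ} (hθ : θ ∈ Ioo (0:ℝ) 1) :
    dimAreg θ F ≤ dimBupper F / (1 - θ) := by
  have hθ1 : 0 < 1 - θ := by linarith [hθ.2]
  rw [dimAreg_eq, dimBupper_eq]
  rw [le_div_iff₀ hθ1]
  apply le_csInf ⟨_, SB_ne F hne hF⟩
  intro α hα
  have h1 : sInf (SA θ F) ≤ α / (1 - θ) := csInf_le (SA_bddBelow θ F) (upper_mem F hF hθ hα)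
  calc sInf (SA θ F) * (1 - θ) ≤ (α / (1 - θ)) * (1 - θ) :=
        mul_le_mul_of_nonneg_right h1 hθ1.le
    _ = α := by field_simp

lemma dimBupper_le_dimAreg {n : ℕ} (F : Set (EuclideanSpace ℝ (Fin n))) (hne : F.Nonempty)
    (hF : Bornology.IsBounded F) {θ : ℝ} (hθ : θ ∈ Ioo (0:ℝ) 1) :
    dimBupper F ≤ dimAreg θ F := by
  rw [dimAreg_eq, dimBupper_eq]
  apply le_csInf ⟨_, upper_mem F hF hθ (SB_ne F hne hF)⟩
  intro β hβ
  apply le_of_forall_pos_le_add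
  intro ε hε
  exact csInf_le (SB_bddBelow F) (lower_mem F hne hF hθ hβ hε)

end Aux

/-- `dim_{A,reg}^θ(F) → \overline{dim}_B(F)` as `θ → 0⁺`. -/
theorem stmt9 {n : ℕ} (F : Set (EuclideanSpace ℝ (Fin n)))
    (hne : F.Nonempty) (hF : Bornology.IsBounded F) :
    Filter.Tendsto (fun θ => dimAreg θ F) (nhdsWithin 0 (Ioi (0:ℝ)))
      (nhds (dimBupper F)) := by
  have hIoo : Ioo (0:ℝ) 1 ∈ nhdsWithin 0 (Ioi (0:ℝ)) :=
    Ioo_mem_nhdsGT_of_mem (by constructor <;> norm_num)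
  have hlow : ∀ᶠ θ in nhdsWithin 0 (Ioi (0:ℝ)), dimBupper F ≤ dimAreg θ F := by
    filter_upwards [hIoo] with θ hθ
    exact dimBupper_le_dimAreg F hne hF hθ
  have hupp : ∀ᶠ θ in nhdsWithin 0 (Ioi (0:ℝ)),
      dimAreg θ F ≤ dimBupper F / (1 - θ) := by
    filter_upwards [hIoo] with θ hθ
    exact dimAreg_le_div F hne hF hθ
  have htend : Filter.Tendsto (fun θ : ℝ => dimBupper F / (1 - θ))
      (nhdsWithin 0 (Ioi (0:ℝ))) (nhds (dimBupper F)) := by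
    have h1 : Filter.Tendsto (fun θ : ℝ => dimBupper F / (1 - θ)) (nhds 0)
        (nhds (dimBupper F / (1 - 0))) :=
      Filter.Tendsto.div tendsto_const_nhds (tendsto_const_nhds.sub Filter.tendsto_id)
        (by norm_num)
    simpa using h1.mono_left nhdsWithin_le_nhds
  exact tendsto_of_tendsto_of_tendsto_of_le_of_le' tendsto_const_nhds htend hlow hupp
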